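/- arXiv:2002.10318 — 2 statements merged into one kernel-verified Lean document; each statement's English description precedes it below -/
import Mathlib

section
/- For each pair of integers n, m ≥ 1 there is a constant c = c(n,m) > 0 with the following property: if K is a vector subspace of R^{n+m} of dimension at most m, then there is a coordinate n-plane P such that dist(w, K) ≥ c for all unit vectors w ∈ P. -/
open Metric Set MeasureTheory ENNReal

noncomputable section

/-- The `k`-dimensional Hausdorff content of a set in a metric space, defined via
countable covers by closed balls. -/
def hContent {X : Type*} [MetricSpace X] (k : ℕ) (S : Set X) : ℝ≥0∞ :=
  ⨅ (B : ℕ → Set X) (_ : S ⊆ ⋃ i, B i) (_ : ∀ i, ∃ x r, B i = Metric.closedBall x r),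
    ∑' i, EMetric.diam (B i) ^ k

/-- The `k`-dimensional Hausdorff measure of a set in a metric space, defined via
countable covers by closed balls of diameter at most `δ`, letting `δ → 0`. -/
def hMeasure {X : Type*} [MetricSpace X] (k : ℕ) (S : Set X) : ℝ≥0∞ :=
  ⨆ (δ : ℝ≥0∞) (_ : 0 < δ),
    ⨅ (B : ℕ → Set X) (_ : S ⊆ ⋃ i, B i)
      (_ : ∀ i, (∃ x r, B i = Metric.closedBall x r) ∧ EMetric.diam (B i) ≤ δ),
      ∑' i, EMetric.diam (B i) ^ k

/-- The closed unit cube `[0,1]^d` in `ℝ^d`. -/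
def unitCube (d : ℕ) : Set (EuclideanSpace ℝ (Fin d)) :=
  {p | ∀ i, p i ∈ Set.Icc (0 : ℝ) 1}

/-- A dyadic subcube of `[0,1]^d`: it has side length `2⁻ᵏ` and lower-left corner `z/2ᵏ`. -/
structure DyadicCube (d : ℕ) : Type where
  k : ℕ
  z : Fin d → ℕ
  hz : ∀ i, z i + 1 ≤ 2 ^ k

namespace DyadicCube

/-- The side length of a dyadic cube. -/
def side {d : ℕ} (Q : DyadicCube d) : ℝ := (2 : ℝ)⁻¹ ^ Q.k

/-- The center of a dyadic cube. -/
def center {d : ℕ} (Q : DyadicCube d) (i : Fin d) : ℝ :=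
  ((Q.z i : ℝ) + 1 / 2) * (2 : ℝ)⁻¹ ^ Q.k

/-- The dyadic cube as a (closed) subset of `ℝ^d`. -/
def toSet {d : ℕ} (Q : DyadicCube d) : Set (EuclideanSpace ℝ (Fin d)) :=
  {p | ∀ i, |p i - Q.center i| ≤ Q.side / 2}

/-- `Q.scaled λ` is the cube `λQ`, with the same center as `Q` and `λ` times the side length. -/
def scaled {d : ℕ} (Q : DyadicCube d) (lam : ℝ) : Set (EuclideanSpace ℝ (Fin d)) :=
  {p | ∀ i, |p i - Q.center i| ≤ lam * Q.side / 2}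

end DyadicCube

/-- The `(n,m)`-mapping content `H^{n,m}_∞(f, A)`: the infimum of
`∑ H^n_∞(f(Q_i)) side(Q_i)^m` over countable covers of `A` by dyadic cubes of `[0,1]^{n+m}`
with pairwise disjoint interiors. -/
def mContent (n m : ℕ) {X : Type*} [MetricSpace X]
    (f : EuclideanSpace ℝ (Fin (n + m)) → X)
    (A : Set (EuclideanSpace ℝ (Fin (n + m)))) : ℝ≥0∞ :=
  ⨅ (S : Set (DyadicCube (n + m))) (_ : A ⊆ ⋃ Q ∈ S, Q.toSet)
    (_ : S.Pairwise fun Q Q' => interior Q.toSet ∩ interior Q'.toSet = ∅),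
    ∑' Q : S, hContent n (f '' Q.1.toSet) * ENNReal.ofReal (Q.1.side ^ m)

/-- The alternative `(n,m)`-mapping content `Ĥ^{n,m}_∞(f, A)`: the infimum of
`∑ H^n_∞(f(S_i)) diam(S_i)^m` over countable covers of `A` by arbitrary subsets of
`[0,1]^{n+m}`. -/
def altMContent (n m : ℕ) {X : Type*} [MetricSpace X]
    (f : EuclideanSpace ℝ (Fin (n + m)) → X)
    (A : Set (EuclideanSpace ℝ (Fin (n + m)))) : ℝ≥0∞ :=
  ⨅ (S : ℕ → Set (EuclideanSpace ℝ (Fin (n + m)))) (_ : A ⊆ ⋃ i, S i)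
    (_ : ∀ i, S i ⊆ unitCube (n + m)),
    ∑' i, hContent n (f '' S i) * EMetric.diam (S i) ^ m

/-- The first `n` coordinates of a point of `ℝ^{n+m} = ℝ^n × ℝ^m`. -/
def xpart (n m : ℕ) (p : EuclideanSpace ℝ (Fin (n + m))) : EuclideanSpace ℝ (Fin n) :=
  WithLp.toLp 2 (fun i => p (Fin.castAdd m i))

/-- The last `m` coordinates of a point of `ℝ^{n+m} = ℝ^n × ℝ^m`. -/
def ypart (n m : ℕ) (p : EuclideanSpace ℝ (Fin (n + m))) : EuclideanSpace ℝ (Fin m) :=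
  WithLp.toLp 2 (fun j => p (Fin.natAdd n j))

/-- The point `(x, y) ∈ ℝ^{n+m}` built from `x ∈ ℝ^n`, `y ∈ ℝ^m`. -/
def pairup (n m : ℕ) (x : EuclideanSpace ℝ (Fin n)) (y : EuclideanSpace ℝ (Fin m)) :
    EuclideanSpace ℝ (Fin (n + m)) :=
  WithLp.toLp 2 (fun i => Fin.addCases (fun i₁ => x i₁) (fun j => y j) i)

/-- The horizontal slice `E_y = E ∩ (ℝ^n × {y})`. -/
def cubeSlice (n m : ℕ) (E : Set (EuclideanSpace ℝ (Fin (n + m))))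
    (y : EuclideanSpace ℝ (Fin m)) : Set (EuclideanSpace ℝ (Fin (n + m))) :=
  {p ∈ E | ypart n m p = y}

/-- `f` is `C`-bi-Lipschitz on `s`. -/
def BiLipschitzOnWith {α β : Type*} [PseudoMetricSpace α] [PseudoMetricSpace β]
    (C : ℝ) (f : α → β) (s : Set α) : Prop :=
  ∀ x ∈ s, ∀ y ∈ s, C⁻¹ * dist x y ≤ dist (f x) (f y) ∧ dist (f x) (f y) ≤ C * dist x y

/-- `(E, g)` is a Hard Sard pair for `f` with constant `C`:
(i) `g` is a globally `C`-bi-Lipschitz homeomorphism of `ℝ^{n+m}` (in particular it restricts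
to a bi-Lipschitz map on `E`);
(ii) writing `F = f ∘ g⁻¹`, for `(x,y), (x',y') ∈ g(E)` one has `F(x,y) = F(x',y')` iff `x = x'`;
(iii) the map `(x,y) ↦ (F(x,y), y)` is `C`-bi-Lipschitz on `g(E)`, where `X × ℝ^m` carries the
max metric.  Conditions (ii) and (iii) are expressed at points `p = g⁻¹(x,y)`, `q = g⁻¹(x',y')`
of `E`. -/
def IsHardSardPairWith (n m : ℕ) {X : Type*} [MetricSpace X]
    (f : EuclideanSpace ℝ (Fin (n + m)) → X)
    (E : Set (EuclideanSpace ℝ (Fin (n + m))))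
    (g : EuclideanSpace ℝ (Fin (n + m)) → EuclideanSpace ℝ (Fin (n + m)))
    (C : ℝ) : Prop :=
  Function.Surjective g ∧
  BiLipschitzOnWith C g Set.univ ∧
  (∀ p ∈ E, ∀ q ∈ E, (f p = f q ↔ xpart n m (g p) = xpart n m (g q))) ∧
  (∀ p ∈ E, ∀ q ∈ E,
    C⁻¹ * dist (g p) (g q) ≤ dist (f p, ypart n m (g p)) (f q, ypart n m (g q)) ∧
    dist (f p, ypart n m (g p)) (f q, ypart n m (g q)) ≤ C * dist (g p) (g q))

/-- `E` is a Hard Sard set for `f` with constant `C`. -/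
def IsHardSardSetWith (n m : ℕ) {X : Type*} [MetricSpace X]
    (f : EuclideanSpace ℝ (Fin (n + m)) → X)
    (E : Set (EuclideanSpace ℝ (Fin (n + m)))) (C : ℝ) : Prop :=
  ∃ g, IsHardSardPairWith n m f E g C

/-- `sup_{x,y ∈ s} | d(f(x), f(y)) - N(x - y) |`. -/
def mdSup {d : ℕ} {X : Type*} [MetricSpace X] (f : EuclideanSpace ℝ (Fin d) → X)
    (s : Set (EuclideanSpace ℝ (Fin d))) (N : Seminorm ℝ (EuclideanSpace ℝ (Fin d))) : ℝ :=
  ⨆ x : s, ⨆ y : s, |dist (f x.1) (f y.1) - N (x.1 - y.1)|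

/-- `md_f` on a set `s` (a cube of side length `side`):
`side⁻¹ · inf_N sup_{x,y ∈ s} | d(f(x), f(y)) - N(x-y) |`, the infimum being over all
seminorms `N` on `ℝ^d`. -/
def mdf {d : ℕ} {X : Type*} [MetricSpace X] (f : EuclideanSpace ℝ (Fin d) → X)
    (s : Set (EuclideanSpace ℝ (Fin d))) (side : ℝ) : ℝ :=
  side⁻¹ * ⨅ N : Seminorm ℝ (EuclideanSpace ℝ (Fin d)), mdSup f s N

/-- The coordinate plane spanned by the standard basis vectors `e_i`, `i ∈ s`. -/
def coordPlane {d : ℕ} (s : Finset (Fin d)) : Submodule ℝ (EuclideanSpace ℝ (Fin d)) :=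
  Submodule.span ℝ {v | ∃ i ∈ s, v = EuclideanSpace.single i (1 : ℝ)}



section CPFAux

open Finset Module

local notation "⟪" x ", " y "⟫" => @inner ℝ _ _ x y

/-- Norm bound on a Euclidean vector with coordinates bounded by `C`. -/
lemma cpf_norm_le_sqrt_mul {k : ℕ} (x : EuclideanSpace ℝ (Fin k)) {C : ℝ} (hC : 0 ≤ C)
    (h : ∀ i, ‖x i‖ ≤ C) : ‖x‖ ≤ Real.sqrt k * C := by
  rw [EuclideanSpace.norm_eq]
  have h1 : ∑ i, ‖x i‖ ^ 2 ≤ ∑ _i : Fin k, C ^ 2 :=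
    Finset.sum_le_sum fun i _ => pow_le_pow_left₀ (norm_nonneg _) (h i) 2
  calc Real.sqrt (∑ i, ‖x i‖ ^ 2) ≤ Real.sqrt (∑ _i : Fin k, C ^ 2) := Real.sqrt_le_sqrt h1
    _ = Real.sqrt ((k : ℝ) * C ^ 2) := by
        rw [Finset.sum_const, Finset.card_univ, Fintype.card_fin, nsmul_eq_mul]
    _ = Real.sqrt k * C := by
        rw [Real.sqrt_mul (by positivity), Real.sqrt_sq hC]

/-- The vector of inner products `(⟪u i, w⟫)ᵢ` as an element of `ℝⁿ`. -/
def cpfGv {d n : ℕ} (u : Fin n → EuclideanSpace ℝ (Fin d)) (w : EuclideanSpace ℝ (Fin d)) :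
    EuclideanSpace ℝ (Fin n) :=
  (WithLp.equiv 2 (Fin n → ℝ)).symm fun i => ⟪u i, w⟫

@[simp] lemma cpfGv_apply {d n : ℕ} (u : Fin n → EuclideanSpace ℝ (Fin d))
    (w : EuclideanSpace ℝ (Fin d)) (i : Fin n) : cpfGv u w i = ⟪u i, w⟫ := rfl

/-- `‖(⟪u i, w⟫)ᵢ‖`, the norm of the projection of `w` onto the span of the `u i`
when the latter are orthonormal. -/
def cpfG {d n : ℕ} (u : Fin n → EuclideanSpace ℝ (Fin d)) (w : EuclideanSpace ℝ (Fin d)) : ℝ :=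
  ‖cpfGv u w‖

lemma cpfG_nonneg {d n : ℕ} (u : Fin n → EuclideanSpace ℝ (Fin d))
    (w : EuclideanSpace ℝ (Fin d)) : 0 ≤ cpfG u w := norm_nonneg _

lemma cpf_continuous_G {d n : ℕ} (u : Fin n → EuclideanSpace ℝ (Fin d)) :
    Continuous (cpfG u) := by
  apply Continuous.norm
  exact (PiLp.continuous_toLp 2 (fun _ : Fin n => ℝ)).comp
    (continuous_pi fun i => (continuous_const.inner continuous_id))

lemma cpf_inner_eq_zero {d n : ℕ} {u : Fin n → EuclideanSpace ℝ (Fin d)}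
    {w : EuclideanSpace ℝ (Fin d)} (h : cpfG u w = 0) (i : Fin n) : ⟪u i, w⟫ = 0 := by
  have h0 : cpfGv u w = 0 := norm_eq_zero.mp h
  calc ⟪u i, w⟫ = cpfGv u w i := rfl
    _ = (0 : EuclideanSpace ℝ (Fin n)) i := by rw [h0]
    _ = 0 := rfl

/-- Bessel's inequality in the present form. -/
lemma cpfG_le_norm {d n : ℕ} {u : Fin n → EuclideanSpace ℝ (Fin d)} (hu : Orthonormal ℝ u)
    (x : EuclideanSpace ℝ (Fin d)) : cpfG u x ≤ ‖x‖ := by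
  rw [cpfG, EuclideanSpace.norm_eq]
  have h1 : ∑ i : Fin n, ‖(⟪u i, x⟫ : ℝ)‖ ^ 2 ≤ ‖x‖ ^ 2 :=
    hu.sum_inner_products_le (x := x) (s := Finset.univ)
  have h2 : ∑ i : Fin n, ‖cpfGv u x i‖ ^ 2 ≤ ‖x‖ ^ 2 := by
    simpa only [cpfGv_apply] using h1
  exact (Real.sqrt_le_sqrt h2).trans_eq (Real.sqrt_sq (norm_nonneg x))

/-- Uniform Lipschitz bound in `u` for unit vectors `w`. -/
lemma cpfG_le_add {d n : ℕ} (u v : Fin n → EuclideanSpace ℝ (Fin d))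
    {w : EuclideanSpace ℝ (Fin d)} (hw : ‖w‖ ≤ 1) :
    cpfG u w ≤ cpfG v w + Real.sqrt n * dist u v := by
  have h1 : ‖cpfGv u w - cpfGv v w‖ ≤ Real.sqrt n * dist u v := by
    apply cpf_norm_le_sqrt_mul _ dist_nonneg
    intro i
    have h2 : (cpfGv u w - cpfGv v w) i = (⟪u i, w⟫ : ℝ) - ⟪v i, w⟫ := rfl
    rw [h2, ← inner_sub_left]
    calc ‖(⟪u i - v i, w⟫ : ℝ)‖ ≤ ‖u i - v i‖ * ‖w‖ := norm_inner_le_norm _ _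
      _ ≤ ‖u i - v i‖ * 1 := by
          exact mul_le_mul_of_nonneg_left hw (norm_nonneg _)
      _ = dist (u i) (v i) := by rw [mul_one, dist_eq_norm]
      _ ≤ dist u v := dist_le_pi_dist u v i
  calc cpfG u w = ‖cpfGv v w + (cpfGv u w - cpfGv v w)‖ := by
        rw [add_sub_cancel]; rfl
    _ ≤ ‖cpfGv v w‖ + ‖cpfGv u w - cpfGv v w‖ := norm_add_le _ _
    _ ≤ cpfG v w + Real.sqrt n * dist u v := by
        exact add_le_add le_rfl h1

lemma cpf_coordPlane_apply_eq_zero {d : ℕ} {s : Finset (Fin d)}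
    {w : EuclideanSpace ℝ (Fin d)} (hw : w ∈ coordPlane s) {j : Fin d} (hj : j ∉ s) :
    w j = 0 := by
  have hle : coordPlane s ≤ LinearMap.ker (EuclideanSpace.projₗ j (𝕜 := ℝ)) := by
    rw [coordPlane, Submodule.span_le]
    rintro v ⟨i, hi, rfl⟩
    have hij : j ≠ i := fun h => hj (h ▸ hi)
    simp [LinearMap.mem_ker, EuclideanSpace.single_apply, hij]
  exact hle hw

/-- Pivot lemma: a subspace of rank `k` is cut out, inside the coordinate planes,
by `k` coordinate functionals. -/
lemma cpf_pivot {d : ℕ} (W : Submodule ℝ (EuclideanSpace ℝ (Fin d))) :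
    ∃ T : Finset (Fin d), T.card ≤ finrank ℝ W ∧
      ∀ w ∈ W, (∀ i ∈ T, w i = 0) → w = 0 := by
  suffices h : ∀ k (W : Submodule ℝ (EuclideanSpace ℝ (Fin d))), finrank ℝ W ≤ k →
      ∃ T : Finset (Fin d), T.card ≤ finrank ℝ W ∧
        ∀ w ∈ W, (∀ i ∈ T, w i = 0) → w = 0 from h _ W le_rfl
  intro k
  induction k with
  | zero =>
    intro W hW
    have hbot : W = ⊥ := Submodule.finrank_eq_zero.mp (Nat.le_zero.mp hW)
    exact ⟨∅, by simp, fun w hw _ => by simpa [hbot] using hw⟩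
  | succ k ih =>
    intro W hW
    by_cases hbot : W = ⊥
    · exact ⟨∅, by simp, fun w hw _ => by simpa [hbot] using hw⟩
    · obtain ⟨w₀, hw₀W, hw₀⟩ := W.ne_bot_iff.mp hbot
      have hex : ∃ i, w₀ i ≠ 0 := by
        by_contra h
        push_neg at h
        exact hw₀ (by ext i; exact h i)
      obtain ⟨i, hi⟩ := hex
      set W' : Submodule ℝ (EuclideanSpace ℝ (Fin d)) :=
        W ⊓ LinearMap.ker (EuclideanSpace.projₗ i (𝕜 := ℝ)) with hW'
      have hlt : W' < W := by
        refine lt_of_le_of_ne inf_le_left fun h => ?_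
        have : w₀ ∈ W' := h ▸ hw₀W
        exact hi this.2
      have hrk : finrank ℝ W' < finrank ℝ W := Submodule.finrank_lt_finrank_of_lt hlt
      obtain ⟨T', hT'c, hT'⟩ := ih W' (by omega)
      refine ⟨insert i T', ?_, ?_⟩
      · calc (insert i T').card ≤ T'.card + 1 := Finset.card_insert_le _ _
          _ ≤ finrank ℝ W' + 1 := by omega
          _ ≤ finrank ℝ W := by omega
      · intro w hw h0
        have hwi : w i = 0 := h0 i (Finset.mem_insert_self _ _)
        have hw' : w ∈ W' := ⟨hw, by simpa [LinearMap.mem_ker] using hwi⟩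
        exact hT' w hw' fun j hj => h0 j (Finset.mem_insert_of_mem hj)

/-- The minimum of `cpfG u` over the unit sphere of the coordinate plane `P_s`. -/
noncomputable def cpfPhi {d n : ℕ} (s : Finset (Fin d))
    (u : Fin n → EuclideanSpace ℝ (Fin d)) : ℝ :=
  sInf (cpfG u '' (Metric.sphere 0 1 ∩ ↑(coordPlane s)))

end CPFAux

/-- **Lemma (quantitative coordinate plane avoidance).**  For each `n, m ≥ 1` there is
`c = c(n,m) > 0` such that for every subspace `K ⊆ ℝ^{n+m}` of dimension at most `m` there is a
coordinate `n`-plane `P` with `dist(w, K) ≥ c` for every unit vector `w ∈ P`. -/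
theorem coordinate_plane_far (n m : ℕ) (hn : 1 ≤ n) (hm : 1 ≤ m) :
    ∃ c : ℝ, 0 < c ∧
      ∀ K : Submodule ℝ (EuclideanSpace ℝ (Fin (n + m))),
        Module.finrank ℝ K ≤ m →
        ∃ s : Finset (Fin (n + m)), s.card = n ∧
          ∀ w ∈ coordPlane s, ‖w‖ = 1 →
            c ≤ Metric.infDist w (K : Set (EuclideanSpace ℝ (Fin (n + m)))) := by
  classical
  set P : Finset (Finset (Fin (n + m))) := Finset.powersetCard n Finset.univ with hPdef
  have hPne : P.Nonempty := by
    obtain ⟨t, hts, htc⟩ := Finset.exists_subset_card_eq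
      (show n ≤ (Finset.univ : Finset (Fin (n + m))).card by simp [Finset.card_univ])
    exact ⟨t, Finset.mem_powersetCard.mpr ⟨hts, htc⟩⟩
  set Sph : Finset (Fin (n + m)) → Set (EuclideanSpace ℝ (Fin (n + m))) :=
    fun s => Metric.sphere 0 1 ∩ ↑(coordPlane s) with hSphdef
  have hphidef : ∀ (s : Finset (Fin (n + m))) (u : Fin n → EuclideanSpace ℝ (Fin (n + m))),
      cpfPhi s u = sInf (cpfG u '' Sph s) := fun s u => rfl
  -- nonemptiness and compactness of the sphere caps
  have hSne : ∀ s ∈ P, (Sph s).Nonempty := by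
    intro s hs
    obtain ⟨hsub, hcard⟩ := Finset.mem_powersetCard.mp hs
    have hcpos : 0 < s.card := by omega
    obtain ⟨i, hi⟩ := Finset.card_pos.mp hcpos
    refine ⟨EuclideanSpace.single i (1 : ℝ), ?_, ?_⟩
    · simp [mem_sphere_zero_iff_norm, EuclideanSpace.norm_single]
    · exact Submodule.subset_span ⟨i, hi, rfl⟩
  have hScpt : ∀ s : Finset (Fin (n + m)), IsCompact (Sph s) := fun s =>
    (isCompact_sphere _ _).inter_right (coordPlane s).closed_of_finiteDimensional
  have hbdd : ∀ (u : Fin n → EuclideanSpace ℝ (Fin (n + m))) (s : Finset (Fin (n + m))),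
      BddBelow (cpfG u '' Sph s) := by
    intro u s
    refine ⟨0, ?_⟩
    rintro x ⟨w, hw, rfl⟩
    exact cpfG_nonneg u w
  have hphile : ∀ (s : Finset (Fin (n + m))) (u : Fin n → EuclideanSpace ℝ (Fin (n + m)))
      (w : EuclideanSpace ℝ (Fin (n + m))), w ∈ Sph s → cpfPhi s u ≤ cpfG u w := by
    intro s u w hw
    rw [hphidef]
    exact csInf_le (hbdd u s) ⟨w, hw, rfl⟩
  have hphinn : ∀ s ∈ P, ∀ u : Fin n → EuclideanSpace ℝ (Fin (n + m)), 0 ≤ cpfPhi s u := by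
    intro s hs u
    rw [hphidef]
    refine le_csInf ((hSne s hs).image _) ?_
    rintro x ⟨w, hw, rfl⟩
    exact cpfG_nonneg u w
  have hminat : ∀ s ∈ P, ∀ u : Fin n → EuclideanSpace ℝ (Fin (n + m)),
      ∃ w ∈ Sph s, cpfPhi s u = cpfG u w := by
    intro s hs u
    obtain ⟨w, hwS, hwmin⟩ := (hScpt s).exists_isMinOn (hSne s hs) (cpf_continuous_G u).continuousOn
    refine ⟨w, hwS, le_antisymm (hphile s u w hwS) ?_⟩
    rw [hphidef]
    refine le_csInf ((hSne s hs).image _) ?_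
    rintro x ⟨w', hw', rfl⟩
    exact isMinOn_iff.mp hwmin w' hw'
  -- Lipschitz continuity of cpfPhi in u
  have hlip : ∀ s ∈ P, ∀ u v : Fin n → EuclideanSpace ℝ (Fin (n + m)),
      cpfPhi s u ≤ cpfPhi s v + Real.sqrt n * dist u v := by
    intro s hs u v
    have key : ∀ w ∈ Sph s, cpfPhi s u - Real.sqrt n * dist u v ≤ cpfG v w := by
      intro w hw
      have hw1 : ‖w‖ ≤ 1 := le_of_eq (mem_sphere_zero_iff_norm.mp hw.1)
      have h1 := cpfG_le_add u v hw1
      have h2 := hphile s u w hw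
      linarith
    have h3 : cpfPhi s u - Real.sqrt n * dist u v ≤ cpfPhi s v := by
      rw [hphidef]
      refine le_csInf ((hSne s hs).image _) ?_
      rintro x ⟨w, hw, rfl⟩
      exact key w hw
    linarith
  have hcont : ∀ s ∈ P,
      Continuous (fun u : Fin n → EuclideanSpace ℝ (Fin (n + m)) => cpfPhi s u) := by
    intro s hs
    have hL : LipschitzWith (Real.toNNReal (Real.sqrt n))
        (fun u : Fin n → EuclideanSpace ℝ (Fin (n + m)) => cpfPhi s u) := by
      apply LipschitzWith.of_dist_le_mul
      intro u v
      rw [Real.coe_toNNReal _ (Real.sqrt_nonneg _), Real.dist_eq, abs_sub_le_iff]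
      constructor
      · have := hlip s hs u v; linarith
      · have h2 := hlip s hs v u
        rw [dist_comm v u] at h2
        linarith
    exact hL.continuous
  -- the compact set of orthonormal n-frames
  set SO : Set (Fin n → EuclideanSpace ℝ (Fin (n + m))) := {u | Orthonormal ℝ u} with hSOdef
  have hSOcl : IsClosed SO := by
    have hSOeq : SO = ⋂ (i : Fin n) (j : Fin n),
        {u : Fin n → EuclideanSpace ℝ (Fin (n + m)) |
          (inner ℝ (u i) (u j) : ℝ) = if i = j then 1 else 0} := by
      ext u
      simp only [hSOdef, Set.mem_setOf_eq, Set.mem_iInter, orthonormal_iff_ite]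
    rw [hSOeq]
    exact isClosed_iInter fun i => isClosed_iInter fun j =>
      isClosed_eq ((continuous_apply i).inner (continuous_apply j)) continuous_const
  have hSOsub : SO ⊆ Metric.closedBall 0 1 := by
    intro u hu
    rw [Metric.mem_closedBall, dist_pi_le_iff zero_le_one]
    intro i
    have h1 : ‖u i‖ = 1 := hu.1 i
    simpa [dist_zero_right] using le_of_eq h1
  have hSOcpt : IsCompact SO := (isCompact_closedBall _ _).of_isClosed_subset hSOcl hSOsub
  have hSOne : SO.Nonempty := by
    refine ⟨fun i => (EuclideanSpace.basisFun (Fin (n + m)) ℝ) (Fin.castLE (Nat.le_add_right n m) i), ?_⟩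
    exact (EuclideanSpace.basisFun (Fin (n + m)) ℝ).orthonormal.comp _
      (Fin.castLE_injective _)
  -- the sum function and its minimizer
  set psi : (Fin n → EuclideanSpace ℝ (Fin (n + m))) → ℝ :=
    fun u => ∑ s ∈ P, cpfPhi s u with hpsidef
  have hpsicont : Continuous psi := continuous_finset_sum _ fun s hs => hcont s hs
  obtain ⟨u₀, hu₀SO, hu₀min⟩ := hSOcpt.exists_isMinOn hSOne hpsicont.continuousOn
  -- for every orthonormal frame there is a good coordinate plane
  have hgood : ∀ u : Fin n → EuclideanSpace ℝ (Fin (n + m)), Orthonormal ℝ u →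
      ∃ s ∈ P, ∀ w : EuclideanSpace ℝ (Fin (n + m)), w ∈ Sph s → 0 < cpfG u w := by
    intro u hu
    have hrkK : Module.finrank ℝ (Submodule.span ℝ (Set.range u)) = n := by
      rw [finrank_span_eq_card hu.linearIndependent, Fintype.card_fin]
    have hrkW : Module.finrank ℝ (Submodule.span ℝ (Set.range u))ᗮ = m := by
      have h1 := Submodule.finrank_add_finrank_orthogonal (Submodule.span ℝ (Set.range u))
      rw [hrkK, finrank_euclideanSpace_fin] at h1
      omega
    obtain ⟨T, hTcard, hT⟩ := cpf_pivot (Submodule.span ℝ (Set.range u))ᗮ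
    have hTm : T.card ≤ m := hTcard.trans (le_of_eq hrkW)
    have hcompl : n ≤ Tᶜ.card := by
      rw [Finset.card_compl, Fintype.card_fin]
      omega
    obtain ⟨s, hsub, hcard⟩ := Finset.exists_subset_card_eq hcompl
    refine ⟨s, Finset.mem_powersetCard.mpr ⟨Finset.subset_univ s, hcard⟩, ?_⟩
    intro w hw
    rcases lt_or_eq_of_le (cpfG_nonneg u w) with h | h
    · exact h
    exfalso
    have hinner : ∀ i, (inner ℝ (u i) w : ℝ) = 0 := cpf_inner_eq_zero h.symm
    have hwK : w ∈ (Submodule.span ℝ (Set.range u))ᗮ := by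
      rw [Submodule.mem_orthogonal]
      intro v hv
      have hle : Submodule.span ℝ (Set.range u) ≤ LinearMap.ker ((innerSL ℝ w : EuclideanSpace ℝ (Fin (n + m)) →ₗ[ℝ] ℝ)) := by
        rw [Submodule.span_le]
        rintro _ ⟨i, rfl⟩
        simp only [SetLike.mem_coe, LinearMap.mem_ker, ContinuousLinearMap.coe_coe, innerSL_apply_apply]
        rw [real_inner_comm]
        exact hinner i
      have hker := hle hv
      rw [LinearMap.mem_ker, ContinuousLinearMap.coe_coe, innerSL_apply_apply] at hker
      rw [real_inner_comm]
      exact hker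
    have hw0 : ∀ j ∈ T, w j = 0 := by
      intro j hj
      have hjs : j ∉ s := fun hjs => (Finset.mem_compl.mp (hsub hjs)) hj
      exact cpf_coordPlane_apply_eq_zero hw.2 hjs
    have hwz : w = 0 := hT w hwK hw0
    have hwn : ‖w‖ = 1 := mem_sphere_zero_iff_norm.mp hw.1
    rw [hwz] at hwn
    simp at hwn
  -- positivity of the minimum
  obtain ⟨s₀, hs₀P, hs₀⟩ := hgood u₀ hu₀SO
  obtain ⟨w₀, hw₀S, hw₀eq⟩ := hminat s₀ hs₀P u₀
  have hphi₀ : 0 < cpfPhi s₀ u₀ := by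
    rw [hw₀eq]
    exact hs₀ w₀ hw₀S
  have hc' : 0 < psi u₀ :=
    lt_of_lt_of_le hphi₀ (Finset.single_le_sum (fun s hs => hphinn s hs u₀) hs₀P)
  have hN : 0 < P.card := Finset.card_pos.mpr hPne
  refine ⟨psi u₀ / P.card, div_pos hc' (by exact_mod_cast hN), ?_⟩
  intro K hK
  -- an orthonormal n-frame in Kᗮ
  have hrank : n ≤ Module.finrank ℝ Kᗮ := by
    have h1 := Submodule.finrank_add_finrank_orthogonal K
    rw [finrank_euclideanSpace_fin] at h1
    omega
  set b := stdOrthonormalBasis ℝ Kᗮ with hbdef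
  set u : Fin n → EuclideanSpace ℝ (Fin (n + m)) :=
    fun i => (b (Fin.castLE hrank i) : EuclideanSpace ℝ (Fin (n + m))) with hudef
  have humem : ∀ i, u i ∈ Kᗮ := by
    intro i
    rw [hudef]
    exact SetLike.coe_mem _
  have hu : Orthonormal ℝ u := by
    rw [orthonormal_iff_ite]
    intro i j
    have hb := b.orthonormal
    rw [orthonormal_iff_ite] at hb
    have h1 := hb (Fin.castLE hrank i) (Fin.castLE hrank j)
    rw [Submodule.coe_inner] at h1
    rw [hudef]
    simp only []
    rw [h1]
    congr 1
    simp [Fin.ext_iff]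
  -- extract a good coordinate plane for u
  have hpsiu : psi u₀ ≤ psi u := isMinOn_iff.mp hu₀min u hu
  have hex : ∃ s ∈ P, psi u₀ / P.card ≤ cpfPhi s u := by
    by_contra hcon
    push_neg at hcon
    have hlt : ∑ s ∈ P, cpfPhi s u < ∑ s ∈ P, psi u₀ / P.card :=
      Finset.sum_lt_sum_of_nonempty hPne hcon
    rw [Finset.sum_const, nsmul_eq_mul] at hlt
    have heq : (P.card : ℝ) * (psi u₀ / P.card) = psi u₀ := by
      field_simp
    rw [heq] at hlt
    rw [hpsidef] at hpsiu
    simp only [] at hpsiu hlt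
    linarith
  obtain ⟨s, hsP, hsphi⟩ := hex
  refine ⟨s, (Finset.mem_powersetCard.mp hsP).2, ?_⟩
  intro w hw hnorm
  by_contra hcon
  push_neg at hcon
  rw [Metric.infDist_lt_iff ⟨0, K.zero_mem⟩] at hcon
  obtain ⟨y, hyK, hdy⟩ := hcon
  have hwS : w ∈ Sph s := ⟨mem_sphere_zero_iff_norm.mpr hnorm, hw⟩
  have h1 : cpfPhi s u ≤ cpfG u w := hphile s u w hwS
  have h2 : cpfG u w = cpfG u (w - y) := by
    have hcoord : ∀ i, (inner ℝ (u i) w : ℝ) = inner ℝ (u i) (w - y) := by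
      intro i
      rw [inner_sub_right]
      have hz : (inner ℝ (u i) y : ℝ) = 0 := by
        have := Submodule.inner_right_of_mem_orthogonal hyK (humem i)
        rw [real_inner_comm]
        exact this
      rw [hz, sub_zero]
    unfold cpfG
    congr 1
    unfold cpfGv
    congr 1
    funext i
    exact hcoord i
  have h3 : cpfG u (w - y) ≤ ‖w - y‖ := cpfG_le_norm hu _
  have h4 : dist w y = ‖w - y‖ := dist_eq_norm w y
  linarith

end
end

section
/- Let n, m ≥ 1 be integers and δ > 0. There is a constant C1 depending only on n and m with the following property: if ‖·‖ is a seminorm on R^{n+m} such that for every coordinate n-plane P there exists a unit vector v_P ∈ P with ‖v_P‖ < δ, then there is an (m+1)-dimensional subspace K0 ⊆ R^{n+m} such that ‖v‖ ≤ C1·δ·|v| for all v ∈ K0, where |v| denotes the Euclidean norm. -/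
open Metric Set MeasureTheory ENNReal

noncomputable section

namespace CSK

variable {d : ℕ}

def coordSupp (s : Finset (Fin d)) : Submodule ℝ (EuclideanSpace ℝ (Fin d)) where
  carrier := {v | ∀ i ∉ s, v i = 0}
  add_mem' := fun {a b} ha hb i hi => by
    simp only [Set.mem_setOf_eq] at *
    simp [PiLp.add_apply, ha i hi, hb i hi]
  zero_mem' := fun i _ => rfl
  smul_mem' := fun c v hv i hi => by
    simp only [Set.mem_setOf_eq] at *
    simp [PiLp.smul_apply, hv i hi]

lemma coordPlane_le_coordSupp (s : Finset (Fin d)) : coordPlane s ≤ coordSupp s := by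
  apply Submodule.span_le.2
  rintro v ⟨i, his, rfl⟩
  intro j hj
  have : j ≠ i := fun h => hj (h ▸ his)
  simp [EuclideanSpace.single_apply, this]

lemma coordPlane_mono {s t : Finset (Fin d)} (h : s ⊆ t) : coordPlane s ≤ coordPlane t := by
  apply Submodule.span_mono
  rintro v ⟨i, his, rfl⟩
  exact ⟨i, h his, rfl⟩

lemma stepA_aux (n : ℕ) (U : Submodule ℝ (EuclideanSpace ℝ (Fin d))) :
    ∀ k : ℕ, ∀ s : Finset (Fin d), s.card = k →
      Module.finrank ℝ ↥(U ⊓ coordPlane s) + n ≤ s.card →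
      ∃ t ⊆ s, t.card = n ∧ U ⊓ coordPlane t = ⊥ := by
  intro k
  induction k using Nat.strong_induction_on with
  | _ k ih =>
    intro s hs hcard
    by_cases hbot : U ⊓ coordPlane s = ⊥
    · obtain ⟨t, hts, htc⟩ := Finset.exists_subset_card_eq (show n ≤ s.card by omega)
      refine ⟨t, hts, htc, le_bot_iff.1 ?_⟩
      exact le_trans (inf_le_inf_left _ (coordPlane_mono hts)) hbot.le
    · obtain ⟨w, hw, hw0⟩ := Submodule.exists_mem_ne_zero_of_ne_bot hbot
      obtain ⟨i, hi⟩ : ∃ i, w i ≠ 0 := by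
        by_contra h
        push_neg at h
        exact hw0 (by ext j; exact h j)
      have his : i ∈ s := by
        by_contra h
        exact hi (coordPlane_le_coordSupp s (hw.2) i h)
      have hlt : U ⊓ coordPlane (s.erase i) < U ⊓ coordPlane s := by
        refine lt_of_le_of_ne (inf_le_inf_left _ (coordPlane_mono (s.erase_subset i))) ?_
        intro h
        have : w ∈ U ⊓ coordPlane (s.erase i) := h ▸ hw
        exact hi (coordPlane_le_coordSupp _ this.2 i (Finset.notMem_erase i s))
      have hfr := Submodule.finrank_lt_finrank_of_lt hlt
      have hcard' : (s.erase i).card = k - 1 := by rw [Finset.card_erase_of_mem his, hs]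
      have hk : 1 ≤ k := by
        rw [← hs]; exact Finset.card_pos.2 ⟨i, his⟩
      obtain ⟨t, hts, h1, h2⟩ := ih (k-1) (by omega) (s.erase i) hcard' (by omega)
      exact ⟨t, hts.trans (s.erase_subset i), h1, h2⟩

lemma stepA (n m : ℕ) (U : Submodule ℝ (EuclideanSpace ℝ (Fin (n + m))))
    (hU : Module.finrank ℝ U ≤ m) :
    ∃ s : Finset (Fin (n + m)), s.card = n ∧ U ⊓ coordPlane s = ⊥ := by
  obtain ⟨t, -, h1, h2⟩ := stepA_aux n U (n+m) Finset.univ (by simp) (by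
    have h3 : Module.finrank ℝ ↥(U ⊓ coordPlane Finset.univ) ≤ Module.finrank ℝ U :=
      Submodule.finrank_mono inf_le_left
    simp only [Finset.card_univ, Fintype.card_fin]
    omega)
  exact ⟨t, h1, h2⟩


lemma exists_orthonormal_superset {m : ℕ} (hmd : m ≤ d)
    (U : Submodule ℝ (EuclideanSpace ℝ (Fin d))) (hU : Module.finrank ℝ U ≤ m) :
    ∃ u : Fin m → EuclideanSpace ℝ (Fin d),
      Orthonormal ℝ u ∧ U ≤ Submodule.span ℝ (Set.range u) := by
  set j := Module.finrank ℝ U with hj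
  set b := stdOrthonormalBasis ℝ U with hb
  set v : Fin d → EuclideanSpace ℝ (Fin d) :=
    fun i => if h : (i : ℕ) < j then (b ⟨i, h⟩ : EuclideanSpace ℝ (Fin d)) else 0 with hv
  have hvon : Orthonormal ℝ (Set.restrict {i : Fin d | (i : ℕ) < j} v) := by
    rw [orthonormal_iff_ite]
    rintro ⟨x, hx⟩ ⟨y, hy⟩
    have hx' : (x : ℕ) < j := hx
    have hy' : (y : ℕ) < j := hy
    simp only [Set.restrict_apply, hv]
    show inner ℝ (dite ((x : ℕ) < j) (fun h => (b ⟨x, h⟩ : EuclideanSpace ℝ (Fin d))) (fun _ => 0))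
      (dite ((y : ℕ) < j) (fun h => (b ⟨y, h⟩ : EuclideanSpace ℝ (Fin d))) (fun _ => 0)) = _
    rw [dif_pos hx', dif_pos hy', ← Submodule.coe_inner]
    have := orthonormal_iff_ite.1 b.orthonormal ⟨x, hx⟩ ⟨y, hy⟩
    rw [this]
    by_cases hxy : x = y
    · subst hxy
      simp
    · have h1 : (⟨(x : ℕ), hx'⟩ : Fin j) ≠ ⟨(y : ℕ), hy'⟩ := by
        simp only [ne_eq, Fin.mk.injEq]
        exact fun h => hxy (Fin.val_injective h)
      have h2 : (⟨x, hx⟩ : {i : Fin d | (i : ℕ) < j}) ≠ ⟨y, hy⟩ := by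
        simp only [ne_eq, Subtype.mk.injEq]
        exact hxy
      rw [if_neg h1, if_neg h2]
  obtain ⟨B, hB⟩ := hvon.exists_orthonormalBasis_extension_of_card_eq (by simp)
  refine ⟨fun i => B (Fin.castLE hmd i),
    B.orthonormal.comp _ (Fin.castLE_injective hmd), ?_⟩
  have hUspan : U = Submodule.span ℝ (Set.range (fun i : Fin j => (b i : EuclideanSpace ℝ (Fin d)))) := by
    conv_lhs => rw [← Submodule.map_subtype_top U, ← b.toBasis.span_eq]
    rw [Submodule.map_span]
    congr 1
    rw [OrthonormalBasis.coe_toBasis, ← Set.range_comp]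
    rfl
  rw [hUspan]
  apply Submodule.span_mono
  rintro x ⟨i, rfl⟩
  have hij : (i : ℕ) < j := i.isLt
  have him : (i : ℕ) < m := lt_of_lt_of_le hij hU
  refine ⟨⟨(i : ℕ), him⟩, ?_⟩
  have h1 : B ⟨(i : ℕ), lt_of_lt_of_le him hmd⟩ = v ⟨(i : ℕ), lt_of_lt_of_le him hmd⟩ :=
    hB _ hij
  show B (Fin.castLE hmd ⟨(i : ℕ), him⟩) = (b i : EuclideanSpace ℝ (Fin d))
  have h2 : Fin.castLE hmd ⟨(i : ℕ), him⟩ = ⟨(i : ℕ), lt_of_lt_of_le him hmd⟩ := rfl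
  rw [h2, h1]
  simp only [hv]
  rw [dif_pos hij]

lemma proj_min {m : ℕ} (u : Fin m → EuclideanSpace ℝ (Fin d)) (hu : Orthonormal ℝ u)
    (v x : EuclideanSpace ℝ (Fin d)) (hx : x ∈ Submodule.span ℝ (Set.range u)) :
    ‖v - ∑ i, (inner ℝ (u i) v : ℝ) • u i‖ ≤ ‖v - x‖ := by
  set p := ∑ i, (inner ℝ (u i) v : ℝ) • u i with hp
  have hite := orthonormal_iff_ite.1 hu
  have hip : ∀ i, (inner ℝ (u i) (v - p) : ℝ) = 0 := by
    intro i
    rw [inner_sub_right, hp, inner_sum]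
    simp only [real_inner_smul_right, hite, mul_ite, mul_one, mul_zero]
    simp [Finset.sum_ite_eq]
  have hspan : ∀ y ∈ Submodule.span ℝ (Set.range u), (inner ℝ y (v - p) : ℝ) = 0 := by
    intro y hy
    induction hy using Submodule.span_induction with
    | mem y hy => obtain ⟨i, rfl⟩ := hy; exact hip i
    | zero => simp
    | add y z _ _ hy hz => rw [inner_add_left, hy, hz, add_zero]
    | smul a y _ hy => rw [real_inner_smul_left, hy, mul_zero]
  have hpx : p - x ∈ Submodule.span ℝ (Set.range u) := by
    refine Submodule.sub_mem _ ?_ hx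
    exact Submodule.sum_mem _ fun i _ =>
      Submodule.smul_mem _ _ (Submodule.subset_span (Set.mem_range_self i))
  have hperp : (inner ℝ (v - p) (p - x) : ℝ) = 0 := by
    rw [real_inner_comm]; exact hspan _ hpx
  have hsq : ‖v - p‖ ^ 2 ≤ ‖v - x‖ ^ 2 := by
    have hvx : v - x = (v - p) + (p - x) := by abel
    rw [hvx, norm_add_sq_real, hperp]
    nlinarith [sq_nonneg ‖p - x‖]
  nlinarith [norm_nonneg (v - p), norm_nonneg (v - x)]


lemma stepB (n m : ℕ) :
    ∃ c : ℝ, 0 < c ∧ ∀ u : Fin m → EuclideanSpace ℝ (Fin (n + m)), Orthonormal ℝ u →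
      ∃ s : Finset (Fin (n + m)), s.card = n ∧
        ∀ v ∈ coordPlane s, ‖v‖ = 1 →
          ∀ x ∈ Submodule.span ℝ (Set.range u), c ≤ ‖v - x‖ := by
  classical
  set E := EuclideanSpace ℝ (Fin (n + m)) with hE
  set Idx := {s : Finset (Fin (n + m)) // s.card = n} with hIdx
  set Z := (Fin m → E) × (Idx → E) with hZ
  set B : ℕ → Set Z := fun k =>
    {z | Orthonormal ℝ z.1 ∧ ∀ S : Idx, z.2 S ∈ coordPlane S.1 ∧ ‖z.2 S‖ = 1 ∧
      ‖z.2 S - ∑ i, (inner ℝ (z.1 i) (z.2 S) : ℝ) • z.1 i‖ ≤ ((k : ℝ) + 1)⁻¹} with hB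
  have hcl : ∀ k, IsClosed (B k) := by
    intro k
    have h1 : IsClosed {z : Z | Orthonormal ℝ z.1} := by
      have he : {z : Z | Orthonormal ℝ z.1} = ⋂ (i : Fin m) (j : Fin m),
          {z : Z | (inner ℝ (z.1 i) (z.1 j) : ℝ) = if i = j then 1 else 0} := by
        ext z
        simp only [Set.mem_setOf_eq, Set.mem_iInter, orthonormal_iff_ite]
      rw [he]
      refine isClosed_iInter fun i => isClosed_iInter fun j => isClosed_eq ?_ continuous_const
      exact Continuous.inner ((continuous_apply i).comp continuous_fst)
        ((continuous_apply j).comp continuous_fst)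
    have h2 : ∀ S : Idx, IsClosed {z : Z | z.2 S ∈ coordPlane S.1 ∧ ‖z.2 S‖ = 1 ∧
        ‖z.2 S - ∑ i, (inner ℝ (z.1 i) (z.2 S) : ℝ) • z.1 i‖ ≤ ((k : ℝ) + 1)⁻¹} := by
      intro S
      have hw : Continuous fun z : Z => z.2 S := (continuous_apply S).comp continuous_snd
      have hcs : IsClosed {z : Z | z.2 S ∈ coordPlane S.1} :=
        (Submodule.closed_of_finiteDimensional (coordPlane S.1)).preimage hw
      have hns : IsClosed {z : Z | ‖z.2 S‖ = 1} :=
        isClosed_eq hw.norm continuous_const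
      have hsum : Continuous fun z : Z => z.2 S - ∑ i, (inner ℝ (z.1 i) (z.2 S) : ℝ) • z.1 i := by
        refine hw.sub (continuous_finset_sum _ fun i _ => ?_)
        exact Continuous.smul
          (Continuous.inner (𝕜 := ℝ) ((continuous_apply i).comp continuous_fst) hw)
          ((continuous_apply i).comp continuous_fst)
      have hle : IsClosed {z : Z |
          ‖z.2 S - ∑ i, (inner ℝ (z.1 i) (z.2 S) : ℝ) • z.1 i‖ ≤ ((k : ℝ) + 1)⁻¹} :=
        isClosed_le hsum.norm continuous_const
      exact (hcs.inter (hns.inter hle))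
    have he2 : B k = {z : Z | Orthonormal ℝ z.1} ∩
        ⋂ S : Idx, {z : Z | z.2 S ∈ coordPlane S.1 ∧ ‖z.2 S‖ = 1 ∧
          ‖z.2 S - ∑ i, (inner ℝ (z.1 i) (z.2 S) : ℝ) • z.1 i‖ ≤ ((k : ℝ) + 1)⁻¹} := by
      ext z
      simp only [hB, Set.mem_setOf_eq, Set.mem_inter_iff, Set.mem_iInter]
    rw [he2]
    exact h1.inter (isClosed_iInter h2)
  have hsub : ∀ k, B (k + 1) ⊆ B k := by
    intro k z hz
    refine ⟨hz.1, fun S => ⟨(hz.2 S).1, (hz.2 S).2.1, le_trans (hz.2 S).2.2 ?_⟩⟩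
    apply inv_anti₀
    · positivity
    · push_cast; linarith
  have hempty : ∃ k : ℕ, B k = ∅ := by
    by_contra h
    push_neg at h
    have hne : ∀ k, (B k).Nonempty := h
    have hbd : B 0 ⊆ Metric.closedBall (0 : Z) 1 := by
      intro z hz
      rw [mem_closedBall_zero_iff]
      rw [Prod.norm_def]
      refine max_le ?_ ?_
      · refine pi_norm_le_iff_of_nonneg zero_le_one |>.2 fun i => ?_
        rw [hz.1.1 i]
      · refine pi_norm_le_iff_of_nonneg zero_le_one |>.2 fun S => ?_
        rw [(hz.2 S).2.1]
    have hcpt : IsCompact (B 0) :=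
      (isCompact_closedBall (0 : Z) 1).of_isClosed_subset (hcl 0) hbd
    obtain ⟨z, hz⟩ := IsCompact.nonempty_iInter_of_sequence_nonempty_isCompact_isClosed
      B hsub hne hcpt hcl
    simp only [Set.mem_iInter] at hz
    have hu : Orthonormal ℝ z.1 := (hz 0).1
    set U := Submodule.span ℝ (Set.range z.1) with hU
    have hUr : Module.finrank ℝ U ≤ m := by
      rw [hU, finrank_span_eq_card hu.linearIndependent]
      simp
    obtain ⟨s, hsc, hsbot⟩ := stepA n m U hUr
    set S : Idx := ⟨s, hsc⟩ with hS
    set w := z.2 S with hw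
    set p := ∑ i, (inner ℝ (z.1 i) w : ℝ) • z.1 i with hp
    have hwp : w = p := by
      have hle : ∀ k : ℕ, ‖w - p‖ ≤ ((k : ℝ) + 1)⁻¹ := fun k => ((hz k).2 S).2.2
      have : ‖w - p‖ ≤ 0 := by
        by_contra hpos
        push_neg at hpos
        obtain ⟨k, hk⟩ := exists_nat_one_div_lt hpos
        have := hle k
        rw [one_div] at hk
        linarith
      have := norm_nonneg (w - p)
      have : ‖w - p‖ = 0 := le_antisymm ‹_› ‹_›
      exact sub_eq_zero.1 (norm_eq_zero.1 this)
    have hpU : p ∈ U := by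
      rw [hp]
      exact Submodule.sum_mem _ fun i _ =>
        Submodule.smul_mem _ _ (Submodule.subset_span (Set.mem_range_self i))
    have hwmem : w ∈ U ⊓ coordPlane s := ⟨hwp ▸ hpU, ((hz 0).2 S).1⟩
    rw [hsbot, Submodule.mem_bot] at hwmem
    have : ‖w‖ = 1 := ((hz 0).2 S).2.1
    rw [hwmem] at this
    simp at this
  obtain ⟨k, hk⟩ := hempty
  refine ⟨((k : ℝ) + 1)⁻¹, by positivity, fun u hu => ?_⟩
  by_contra hcon
  push_neg at hcon
  have hch : ∀ S : Idx, ∃ v, v ∈ coordPlane S.1 ∧ ‖v‖ = 1 ∧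
      ‖v - ∑ i, (inner ℝ (u i) v : ℝ) • u i‖ ≤ ((k : ℝ) + 1)⁻¹ := by
    intro S
    obtain ⟨v, hv1, hv2, x, hx, hxlt⟩ := hcon S.1 S.2
    exact ⟨v, hv1, hv2, le_trans (proj_min u hu v x hx) hxlt.le⟩
  choose w hw using hch
  have : (u, w) ∈ B k := ⟨hu, fun S => hw S⟩
  rw [hk] at this
  exact this

lemma coeff_bound {d M : ℕ} (c : ℝ) (hc : 0 < c) (v : Fin M → EuclideanSpace ℝ (Fin d))
    (hunit : ∀ i, ‖v i‖ = 1)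
    (hsep : ∀ i : Fin M, ∀ x ∈ Submodule.span ℝ (v '' {i' | i' < i}), c ≤ ‖v i - x‖) :
    ∀ k : ℕ, ∀ b : Fin M → ℝ, (∀ i : Fin M, k ≤ (i : ℕ) → b i = 0) →
      ∑ i, |b i| ≤ ((1 + c⁻¹) ^ k - 1) * ‖∑ i, b i • v i‖ := by
  classical
  intro k
  induction k with
  | zero =>
    intro b hb
    have hz : ∀ i, b i = 0 := fun i => hb i (Nat.zero_le _)
    simp [hz]
  | succ k ih =>
    intro b hb
    have hcinv : (0 : ℝ) < c⁻¹ := by positivity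
    have hc1 : (1 : ℝ) ≤ 1 + c⁻¹ := by linarith
    have hpow1 : (1 : ℝ) ≤ (1 + c⁻¹) ^ k := one_le_pow₀ hc1
    set w := ∑ i, b i • v i with hwdef
    have hwn : (0 : ℝ) ≤ ‖w‖ := norm_nonneg w
    by_cases hkM : k < M
    · set ik : Fin M := ⟨k, hkM⟩ with hik
      set b' := Function.update b ik 0 with hb'def
      set w' := ∑ i, b' i • v i with hw'def
      -- w' lies in the span of earlier vectors
      have hw'mem : w' ∈ Submodule.span ℝ (v '' {i' | i' < ik}) := by
        apply Submodule.sum_mem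
        intro i _
        by_cases hi : i < ik
        · exact Submodule.smul_mem _ _ (Submodule.subset_span ⟨i, hi, rfl⟩)
        · have hzero : b' i = 0 := by
            rcases eq_or_ne i ik with rfl | hne
            · simp [hb'def]
            · have hival : (k : ℕ) + 1 ≤ (i : ℕ) := by
                have h1 : ¬ ((i : ℕ) < k) := by
                  intro hlt
                  exact hi (by simpa [hik, Fin.lt_def] using hlt)
                have h2 : (i : ℕ) ≠ k := fun h => hne (Fin.ext (by simp [hik, h]))
                omega
              rw [hb'def, Function.update_of_ne hne]
              exact hb i hival
          rw [hzero, zero_smul]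
          exact Submodule.zero_mem _
      -- splitting sums
      have hfun : (fun i => b' i • v i) = Function.update (fun i => b i • v i) ik 0 := by
        funext i
        rcases eq_or_ne i ik with rfl | hne
        · simp [hb'def]
        · simp [hb'def, Function.update_of_ne hne]
      have hsum1 : w' = ∑ i ∈ Finset.univ.erase ik, b i • v i := by
        rw [hw'def, hfun, ← Finset.sdiff_singleton_eq_erase,
          Finset.sum_update_of_mem (Finset.mem_univ ik)]
        simp
      have hsum2 : w = b ik • v ik + ∑ i ∈ Finset.univ.erase ik, b i • v i :=
        (Finset.add_sum_erase _ _ (Finset.mem_univ ik)).symm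
      have hsplit : w = b ik • v ik + w' := by rw [hsum1, ← hsum2]
      -- |b ik| * c ≤ ‖w‖
      have hbik : |b ik| * c ≤ ‖w‖ := by
        by_cases hbz : b ik = 0
        · simp [hbz]
        · have hx : -((b ik)⁻¹ • w') ∈ Submodule.span ℝ (v '' {i' | i' < ik}) :=
            Submodule.neg_mem _ (Submodule.smul_mem _ _ hw'mem)
          have hcle := hsep ik _ hx
          have heq : v ik - -((b ik)⁻¹ • w') = (b ik)⁻¹ • w := by
            rw [hsplit, smul_add, smul_smul, inv_mul_cancel₀ hbz, one_smul]
            abel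
          rw [heq, norm_smul, Real.norm_eq_abs, abs_inv] at hcle
          have habs : 0 < |b ik| := abs_pos.2 hbz
          calc |b ik| * c ≤ |b ik| * (|b ik|⁻¹ * ‖w‖) :=
                mul_le_mul_of_nonneg_left hcle habs.le
            _ = ‖w‖ := by field_simp
      have hbik' : |b ik| ≤ c⁻¹ * ‖w‖ := by
        calc |b ik| = |b ik| * c * c⁻¹ := by field_simp
          _ ≤ ‖w‖ * c⁻¹ := mul_le_mul_of_nonneg_right hbik (by positivity)
          _ = c⁻¹ * ‖w‖ := mul_comm _ _
      -- ‖w'‖ bound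
      have hw' : ‖w'‖ ≤ ‖w‖ + |b ik| := by
        have : w' = w - b ik • v ik := by rw [hsplit]; abel
        rw [this]
        calc ‖w - b ik • v ik‖ ≤ ‖w‖ + ‖b ik • v ik‖ := norm_sub_le _ _
          _ = ‖w‖ + |b ik| := by rw [norm_smul, Real.norm_eq_abs, hunit ik, mul_one]
      -- b' satisfies level-k hypothesis
      have hb' : ∀ i : Fin M, k ≤ (i : ℕ) → b' i = 0 := by
        intro i hi
        rcases eq_or_ne i ik with rfl | hne
        · simp [hb'def]
        · have h2 : (i : ℕ) ≠ k := fun h => hne (Fin.ext (by simp [hik, h]))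
          rw [hb'def, Function.update_of_ne hne]
          exact hb i (by omega)
      have hIH := ih b' hb'
      rw [← hw'def] at hIH
      -- sum of abs splits
      have habs1 : ∑ i, |b i| = |b ik| + ∑ i ∈ Finset.univ.erase ik, |b i| :=
        (Finset.add_sum_erase _ _ (Finset.mem_univ ik)).symm
      have habs2 : ∑ i, |b' i| = ∑ i ∈ Finset.univ.erase ik, |b i| := by
        rw [← Finset.add_sum_erase _ (fun i => |b' i|) (Finset.mem_univ ik)]
        have : |b' ik| = 0 := by simp [hb'def]
        rw [this, zero_add]
        apply Finset.sum_congr rfl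
        intro i hi
        rw [hb'def, Function.update_of_ne (Finset.ne_of_mem_erase hi)]
      have hw'le : ‖w'‖ ≤ (1 + c⁻¹) * ‖w‖ := by
        calc ‖w'‖ ≤ ‖w‖ + |b ik| := hw'
          _ ≤ ‖w‖ + c⁻¹ * ‖w‖ := by linarith
          _ = (1 + c⁻¹) * ‖w‖ := by ring
      have hpows : (1 + c⁻¹) ^ (k + 1) = (1 + c⁻¹) ^ k * (1 + c⁻¹) := pow_succ _ _
      have hfinal : ∑ i, |b i| ≤ ((1 + c⁻¹) ^ (k + 1) - 1) * ‖w‖ := by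
        rw [habs1, ← habs2]
        have h1 : ∑ i, |b' i| ≤ ((1 + c⁻¹) ^ k - 1) * ((1 + c⁻¹) * ‖w‖) := by
          refine le_trans hIH ?_
          apply mul_le_mul_of_nonneg_left hw'le
          linarith
        nlinarith
      exact hfinal
    · -- k ≥ M : the hypothesis is vacuous at level k as well
      have hb0 : ∀ i : Fin M, k ≤ (i : ℕ) → b i = 0 := by
        intro i hi
        exact absurd (lt_of_le_of_lt hi i.isLt) hkM
      have := ih b hb0
      refine le_trans this ?_
      apply mul_le_mul_of_nonneg_right _ hwn
      have := pow_le_pow_right₀ hc1 (show k ≤ k + 1 by omega)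
      linarith


lemma build (n m : ℕ) (c : ℝ) (hc : 0 < c)
    (hB : ∀ u : Fin m → EuclideanSpace ℝ (Fin (n + m)), Orthonormal ℝ u →
      ∃ s : Finset (Fin (n + m)), s.card = n ∧
        ∀ v ∈ coordPlane s, ‖v‖ = 1 →
          ∀ x ∈ Submodule.span ℝ (Set.range u), c ≤ ‖v - x‖)
    (δ : ℝ) (N : Seminorm ℝ (EuclideanSpace ℝ (Fin (n + m))))
    (hN : ∀ s : Finset (Fin (n + m)), s.card = n →
      ∃ v ∈ coordPlane s, ‖v‖ = 1 ∧ N v < δ) :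
    ∀ j : ℕ, j ≤ m + 1 → ∃ v : Fin j → EuclideanSpace ℝ (Fin (n + m)),
      LinearIndependent ℝ v ∧ (∀ i, ‖v i‖ = 1 ∧ N (v i) < δ) ∧
      ∀ i : Fin j, ∀ x ∈ Submodule.span ℝ (v '' {i' | i' < i}), c ≤ ‖v i - x‖ := by
  intro j
  induction j with
  | zero =>
    intro _
    exact ⟨fun i => i.elim0, linearIndependent_empty_type, fun i => i.elim0, fun i => i.elim0⟩
  | succ j ih =>
    intro hj
    obtain ⟨v, hli, hvals, hsep⟩ := ih (by omega)
    set U := Submodule.span ℝ (Set.range v) with hU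
    have hUr : Module.finrank ℝ U ≤ m := by
      rw [hU, finrank_span_eq_card hli]
      simp
      omega
    obtain ⟨u, hu, hUu⟩ := exists_orthonormal_superset (Nat.le_add_left m n) U hUr
    obtain ⟨s, hsc, hs⟩ := hB u hu
    obtain ⟨v', hv'p, hv'n, hv'N⟩ := hN s hsc
    have hsepU : ∀ x ∈ U, c ≤ ‖v' - x‖ := fun x hx => hs v' hv'p hv'n x (hUu hx)
    have hv'notmem : v' ∉ U := by
      intro hmem
      have := hsepU v' hmem
      simp at this
      linarith
    refine ⟨Fin.snoc v v', (linearIndependent_fin_snoc).2 ⟨hli, hv'notmem⟩, ?_, ?_⟩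
    · intro i
      refine Fin.lastCases ?_ ?_ i
      · rw [Fin.snoc_last]; exact ⟨hv'n, hv'N⟩
      · intro i₀
        rw [Fin.snoc_castSucc]
        exact hvals i₀
    · intro i
      refine Fin.lastCases ?_ ?_ i
      · intro x hx
        rw [Fin.snoc_last]
        refine hsepU x ?_
        refine Submodule.span_le.2 ?_ hx
        rintro y ⟨i', hi', rfl⟩
        have : i' ≠ Fin.last j := Fin.ne_last_of_lt hi'
        obtain ⟨i₀, rfl⟩ := Fin.exists_castSucc_eq.2 this
        rw [Fin.snoc_castSucc]
        exact Submodule.subset_span (Set.mem_range_self i₀)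
      · intro i₀ x hx
        rw [Fin.snoc_castSucc]
        refine hsep i₀ x ?_
        refine Submodule.span_le.2 ?_ hx
        rintro y ⟨i', hi', rfl⟩
        have hi'2 : i' < Fin.castSucc i₀ := hi'
        have hne : i' ≠ Fin.last j :=
          Fin.ne_last_of_lt (lt_of_lt_of_le hi'2 (Fin.castSucc_lt_last i₀).le)
        obtain ⟨i'', rfl⟩ := Fin.exists_castSucc_eq.2 hne
        rw [Fin.snoc_castSucc]
        have hlt : i'' < i₀ := by
          have h3 : i''.castSucc < i₀.castSucc := hi'
          exact Fin.castSucc_lt_castSucc_iff.1 h3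
        exact Submodule.subset_span ⟨i'', hlt, rfl⟩


end CSK

/-- **Claim (compressed seminorms have large almost-kernel).**  Let `n, m ≥ 1`.  There is a
constant `C₁`, depending only on `n` and `m`, such that for every `δ > 0` and every seminorm
`N` on `ℝ^{n+m}` with the property that every coordinate `n`-plane contains a unit vector `v`
with `N(v) < δ`, there is an `(m+1)`-dimensional subspace `K₀` with `N(v) ≤ C₁·δ·|v|` for every
`v ∈ K₀`. -/
theorem compressed_seminorm_kernel (n m : ℕ) (hn : 1 ≤ n) (hm : 1 ≤ m) :
    ∃ C₁ : ℝ, 0 < C₁ ∧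
      ∀ δ : ℝ, 0 < δ →
        ∀ N : Seminorm ℝ (EuclideanSpace ℝ (Fin (n + m))),
          (∀ s : Finset (Fin (n + m)), s.card = n →
            ∃ v ∈ coordPlane s, ‖v‖ = 1 ∧ N v < δ) →
          ∃ K₀ : Submodule ℝ (EuclideanSpace ℝ (Fin (n + m))),
            Module.finrank ℝ K₀ = m + 1 ∧ ∀ v ∈ K₀, N v ≤ C₁ * δ * ‖v‖ := by
  obtain ⟨c, hc, hB⟩ := CSK.stepB n m
  have hcinv : (0 : ℝ) < c⁻¹ := by positivity
  refine ⟨(1 + c⁻¹) ^ (m + 1), by positivity, ?_⟩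
  intro δ hδ N hN
  obtain ⟨v, hli, hvals, hsep⟩ := CSK.build n m c hc hB δ N hN (m + 1) le_rfl
  refine ⟨Submodule.span ℝ (Set.range v), ?_, ?_⟩
  · rw [finrank_span_eq_card hli]
    simp
  · intro w hw
    obtain ⟨b, hb⟩ := Submodule.mem_span_range_iff_exists_fun ℝ |>.1 hw
    have hcb := CSK.coeff_bound c hc v (fun i => (hvals i).1) hsep (m + 1) b
      (fun i hi => absurd (lt_of_le_of_lt hi i.isLt) (lt_irrefl _))
    rw [hb] at hcb
    have hNle : N w ≤ ∑ i, |b i| * δ := by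
      calc N w = N (∑ i, b i • v i) := by rw [hb]
        _ ≤ ∑ i, N (b i • v i) :=
            Finset.le_sum_of_subadditive N (le_of_eq (map_zero N)) (fun x y => map_add_le_add N x y) _ _
        _ = ∑ i, |b i| * N (v i) := by
            apply Finset.sum_congr rfl
            intro i _
            rw [map_smul_eq_mul, Real.norm_eq_abs]
        _ ≤ ∑ i, |b i| * δ := by
            apply Finset.sum_le_sum
            intro i _
            exact mul_le_mul_of_nonneg_left (hvals i).2.le (abs_nonneg _)
    have hsum : ∑ i, |b i| * δ = (∑ i, |b i|) * δ := by rw [Finset.sum_mul]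
    have h1 : (∑ i, |b i|) * δ ≤ ((1 + c⁻¹) ^ (m + 1) - 1) * ‖w‖ * δ :=
      mul_le_mul_of_nonneg_right hcb hδ.le
    have h2 : ((1 + c⁻¹) ^ (m + 1) - 1) * ‖w‖ * δ ≤ (1 + c⁻¹) ^ (m + 1) * δ * ‖w‖ := by
      have hwn : (0 : ℝ) ≤ ‖w‖ := norm_nonneg w
      nlinarith
    linarith [hNle, hsum ▸ hNle]


end
end
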